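/- Let V be a finite set, x : V → ℝ² an injective assignment of positions, C > 0 and D > 0 real numbers, and Δ : V → ℝ detunings satisfying Δ_v < C/D⁶ for every v ∈ V. Define the classical Rydberg energy of a subset S ⊆ V by E(S) = −Σ_{v∈S} Δ_v + Σ_{{u,w}⊆S, u≠w} C/‖x_u − x_w‖⁶. If S ⊆ V contains two distinct elements u, w with ‖x_u − x_w‖ ≤ D, then E(S \ {u}) < E(S). Consequently, every subset minimizing E is an independent set of the unit disk graph on V with threshold D (the graph joining u and w whenever u ≠ w and ‖x_u − x_w‖ ≤ D). -/

import Mathlib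

open scoped Classical

/-- The classical (Ω = 0) Rydberg energy of the configuration where exactly the
atoms in `S` are excited:
`E(S) = −Σ_{v∈S} Δ_v + Σ_{{u,w}⊆S, u≠w} C/‖x_u − x_w‖⁶`
(the sum over unordered pairs written as half the sum over ordered pairs). -/
noncomputable def rydbergEnergy {V : Type*} [Fintype V] [DecidableEq V]
    (x : V → EuclideanSpace ℝ (Fin 2)) (C : ℝ) (Δ : V → ℝ) (S : Finset V) : ℝ :=
  -∑ v ∈ S, Δ v + (∑ p ∈ S.offDiag, C / ‖x p.1 - x p.2‖ ^ 6) / 2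

/-- The unit disk graph on `V` with threshold `D`: distinct `u, w` are adjacent
exactly when `‖x u − x w‖ ≤ D`. -/
def unitDiskGraph {V : Type*} (x : V → EuclideanSpace ℝ (Fin 2)) (D : ℝ) :
    SimpleGraph V :=
  SimpleGraph.fromRel fun u w => ‖x u - x w‖ ≤ D

theorem rydberg_ground_state_is_independent {V : Type*} [Fintype V] [DecidableEq V]
    (x : V → EuclideanSpace ℝ (Fin 2)) (hx : Function.Injective x)
    (C D : ℝ) (hC : 0 < C) (hD : 0 < D)
    (Δ : V → ℝ) (hΔ : ∀ v, Δ v < C / D ^ 6) :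
    (∀ S : Finset V, ∀ u ∈ S, ∀ w ∈ S, u ≠ w → ‖x u - x w‖ ≤ D →
      rydbergEnergy x C Δ (S.erase u) < rydbergEnergy x C Δ S) ∧
    (∀ S : Finset V,
      (∀ T : Finset V, rydbergEnergy x C Δ S ≤ rydbergEnergy x C Δ T) →
      ∀ u ∈ S, ∀ w ∈ S, ¬ (unitDiskGraph x D).Adj u w) := by
  have key : ∀ S : Finset V, ∀ u ∈ S, ∀ w ∈ S, u ≠ w → ‖x u - x w‖ ≤ D →
      rydbergEnergy x C Δ (S.erase u) < rydbergEnergy x C Δ S := by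
    intro S u hu w hw huw hle
    set T := S.erase u with hT
    have hwT : w ∈ T := Finset.mem_erase.2 ⟨fun h => huw h.symm, hw⟩
    have huT : u ∉ T := Finset.notMem_erase u S
    have hS : S = insert u T := (Finset.insert_erase hu).symm
    set f : V × V → ℝ := fun p => C / ‖x p.1 - x p.2‖ ^ 6 with hf
    have hoff : (insert u T).offDiag = T.offDiag ∪ {u} ×ˢ T ∪ T ×ˢ {u} :=
      Finset.offDiag_insert huT
    have hdisj1 : Disjoint (T.offDiag ∪ {u} ×ˢ T) (T ×ˢ {u}) := by
      rw [Finset.disjoint_left]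
      rintro ⟨a, b⟩ hab hab'
      simp only [Finset.mem_product, Finset.mem_singleton] at hab'
      rcases Finset.mem_union.1 hab with h | h
      · exact huT (hab'.2 ▸ (Finset.mem_offDiag.1 h).2.1)
      · simp only [Finset.mem_product, Finset.mem_singleton] at h
        exact huT (h.1 ▸ hab'.1)
    have hdisj2 : Disjoint T.offDiag ({u} ×ˢ T) := by
      rw [Finset.disjoint_left]
      rintro ⟨a, b⟩ hab hab'
      simp only [Finset.mem_product, Finset.mem_singleton] at hab'
      exact huT (hab'.1 ▸ (Finset.mem_offDiag.1 hab).1)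
    have hsum : ∑ p ∈ S.offDiag, f p
        = ∑ p ∈ T.offDiag, f p + (∑ v ∈ T, f (u, v)) + (∑ v ∈ T, f (v, u)) := by
      rw [hS, hoff, Finset.sum_union hdisj1, Finset.sum_union hdisj2]
      congr 1
      · congr 1
        rw [Finset.singleton_product, Finset.sum_map]
        rfl
      · rw [Finset.product_singleton, Finset.sum_map]
        rfl
    have hsymm : ∀ v, f (v, u) = f (u, v) := by
      intro v
      simp only [hf]
      rw [← norm_neg (x v - x u), neg_sub]
    have hsum2 : ∑ p ∈ S.offDiag, f p
        = ∑ p ∈ T.offDiag, f p + 2 * (∑ v ∈ T, f (u, v)) := by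
      rw [hsum]
      have : ∑ v ∈ T, f (v, u) = ∑ v ∈ T, f (u, v) := Finset.sum_congr rfl fun v _ => hsymm v
      rw [this]; ring
    have hΔsum : ∑ v ∈ S, Δ v = Δ u + ∑ v ∈ T, Δ v := by
      rw [hS, Finset.sum_insert huT]
    -- the interaction sum over T is > Δ u
    have hterm : C / D ^ 6 ≤ f (u, w) := by
      have hne : x u - x w ≠ 0 := sub_ne_zero.2 fun h => huw (hx h)
      have hpos : (0:ℝ) < ‖x u - x w‖ := norm_pos_iff.2 hne
      have h6 : ‖x u - x w‖ ^ 6 ≤ D ^ 6 := by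
        exact pow_le_pow_left₀ (le_of_lt hpos) hle 6
      have h6pos : (0:ℝ) < ‖x u - x w‖ ^ 6 := pow_pos hpos 6
      exact div_le_div_of_nonneg_left (le_of_lt hC) h6pos h6
    have hnonneg : ∀ v ∈ T, 0 ≤ f (u, v) := by
      intro v _
      exact div_nonneg (le_of_lt hC) (pow_nonneg (norm_nonneg _) 6)
    have hbig : Δ u < ∑ v ∈ T, f (u, v) := by
      calc Δ u < C / D ^ 6 := hΔ u
        _ ≤ f (u, w) := hterm
        _ ≤ ∑ v ∈ T, f (u, v) := Finset.single_le_sum hnonneg hwT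
    simp only [rydbergEnergy]
    rw [hsum2, hΔsum]
    have : (∑ p ∈ T.offDiag, f p + 2 * ∑ v ∈ T, f (u, v)) / 2
        = (∑ p ∈ T.offDiag, f p) / 2 + ∑ v ∈ T, f (u, v) := by ring
    rw [this]
    linarith
  refine ⟨key, ?_⟩
  intro S hmin u hu w hw hadj
  rw [unitDiskGraph, SimpleGraph.fromRel_adj] at hadj
  obtain ⟨hne, h | h⟩ := hadj
  · exact absurd (hmin (S.erase u)) (not_le.2 (key S u hu w hw hne h))
  · have h' : ‖x u - x w‖ ≤ D := by rwa [← norm_neg (x w - x u), neg_sub] at h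
    exact absurd (hmin (S.erase u)) (not_le.2 (key S u hu w hw hne h'))
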